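/- Combined continuity estimate: under the hypotheses of the previous mild-solution estimate, there exists a constant C₂ = C₂(L, M, a, t₁) such that ‖u(t) − v(t)‖_V ≤ C₂ (1 + t^{−1/2}) ‖u₀ − v₀‖_H for all t ∈ (0, t₁]. In particular, u₀ ↦ u(t) is continuous from (H, ‖·‖_H) (restricted to bounded sets of V) to (V, ‖·‖_V) for each t > 0, uniformly on compact time intervals [t₀, t₁] with t₀ > 0. -/

import Mathlib

open MeasureTheory Set intervalIntegral
set_option maxHeartbeats 1000000

private lemma rpow_half_mul {x : ℝ} (hx : 0 < x) :
    x ^ ((1:ℝ)/2) * x ^ (-(1:ℝ)/2) = 1 := by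
  rw [← Real.rpow_add hx]; norm_num

private lemma rpow_neg_half_anti {x y : ℝ} (hx : 0 < x) (hxy : x ≤ y) :
    y ^ (-(1:ℝ)/2) ≤ x ^ (-(1:ℝ)/2) := by
  have hy : (0:ℝ) < y := lt_of_lt_of_le hx hxy
  have h2 : x ^ ((1:ℝ)/2) ≤ y ^ ((1:ℝ)/2) := Real.rpow_le_rpow hx.le hxy (by norm_num)
  have hx2 : (0:ℝ) < x ^ ((1:ℝ)/2) := Real.rpow_pos_of_pos hx _
  have := one_div_le_one_div_of_le hx2 h2
  simpa [neg_div, Real.rpow_neg hx.le, Real.rpow_neg hy.le, one_div] using this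

private lemma exp_half_le {z : ℝ} (hz : 0 < z) :
    Real.exp (-(z/2)) ≤ z ^ (-(1:ℝ)/2) := by
  have h1 : z ≤ Real.exp z := by linarith [Real.add_one_le_exp z]
  have h2 : z ^ ((1:ℝ)/2) ≤ (Real.exp z) ^ ((1:ℝ)/2) :=
    Real.rpow_le_rpow hz.le h1 (by norm_num)
  have h3 : (Real.exp z) ^ ((1:ℝ)/2) = Real.exp (z/2) := by
    rw [Real.rpow_def_of_pos (Real.exp_pos _), Real.log_exp]; ring_nf
  rw [h3] at h2
  have h4 : (0:ℝ) < z ^ ((1:ℝ)/2) := Real.rpow_pos_of_pos hz _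
  have := inv_anti₀ h4 h2
  rw [← Real.exp_neg] at this
  rw [show -(1:ℝ)/2 = -((1:ℝ)/2) by ring, Real.rpow_neg hz.le]
  convert this using 2

private lemma int_rpow_half {c : ℝ} :
    ∫ r in (0:ℝ)..c, r ^ (-(1:ℝ)/2) = 2 * c ^ ((1:ℝ)/2) := by
  rw [integral_rpow (Or.inl (by norm_num))]
  norm_num
  ring

private lemma k1_ii (l a b : ℝ) :
    IntervalIntegrable (fun r : ℝ => r ^ (-(1:ℝ)/2) * Real.exp (-(l*r))) volume a b :=
  (intervalIntegrable_rpow' (by norm_num)).mul_continuousOn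
    (Continuous.continuousOn (by continuity))

private lemma k1_small {l c : ℝ} (hl : 0 ≤ l) (hc : 0 ≤ c) :
    ∫ r in (0:ℝ)..c, r ^ (-(1:ℝ)/2) * Real.exp (-(l*r)) ≤ 2 * c ^ ((1:ℝ)/2) := by
  rw [← int_rpow_half]
  apply integral_mono_on hc (k1_ii l 0 c) (intervalIntegrable_rpow' (by norm_num))
  intro x hx
  have hx0 : 0 ≤ x := hx.1
  have : Real.exp (-(l*x)) ≤ 1 := Real.exp_le_one_iff.mpr (by nlinarith)
  have h0 : (0:ℝ) ≤ x ^ (-(1:ℝ)/2) := Real.rpow_nonneg hx0 _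
  nlinarith

private lemma exp_neg_le_rpow' {x : ℝ} (hx : 0 < x) : Real.exp (-x) ≤ 4 * x ^ (-(2:ℝ)) := by
  have h1 : x / 2 + 1 ≤ Real.exp (x/2) := Real.add_one_le_exp _
  have h3 : x ^ 2 / 4 ≤ Real.exp x := by
    have h2 : Real.exp (x/2) * Real.exp (x/2) = Real.exp x := by
      rw [← Real.exp_add]; ring_nf
    nlinarith [Real.exp_pos (x/2)]
  have h4 : x ^ (-(2:ℝ)) = (x ^ 2)⁻¹ := by
    rw [Real.rpow_neg hx.le, ← Real.rpow_natCast x 2]; norm_num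
  rw [Real.exp_neg, h4]
  calc (Real.exp x)⁻¹ ≤ (x^2/4)⁻¹ := inv_anti₀ (by positivity) h3
    _ = 4 * (x^2)⁻¹ := by field_simp

private lemma k1 {l c : ℝ} (hl : 1 ≤ l) (hc : 0 ≤ c) :
    ∫ r in (0:ℝ)..c, r ^ (-(1:ℝ)/2) * Real.exp (-(l*r)) ≤ 5 * l ^ (-(1:ℝ)/2) := by
  have hl0 : (0:ℝ) < l := lt_of_lt_of_le one_pos hl
  have hlhalf : (0:ℝ) < l ^ (-(1:ℝ)/2) := Real.rpow_pos_of_pos hl0 _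
  have hinv : ((1:ℝ)/l) ^ ((1:ℝ)/2) = l ^ (-(1:ℝ)/2) := by
    rw [one_div, ← Real.rpow_neg_one l, ← Real.rpow_mul hl0.le]
    norm_num
  rcases le_or_gt c (1/l) with hcase | hcase
  · calc ∫ r in (0:ℝ)..c, r ^ (-(1:ℝ)/2) * Real.exp (-(l*r)) ≤ 2 * c ^ ((1:ℝ)/2) :=
          k1_small hl0.le hc
      _ ≤ 2 * ((1:ℝ)/l) ^ ((1:ℝ)/2) := by
          have := Real.rpow_le_rpow hc hcase (by norm_num : (0:ℝ) ≤ 1/2)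
          nlinarith
      _ ≤ 5 * l ^ (-(1:ℝ)/2) := by rw [hinv]; nlinarith
  · have h1l : (0:ℝ) < 1/l := by positivity
    rw [← integral_add_adjacent_intervals (k1_ii l 0 (1/l)) (k1_ii l (1/l) c)]
    have hp1 : ∫ r in (0:ℝ)..(1/l), r ^ (-(1:ℝ)/2) * Real.exp (-(l*r)) ≤ 2 * l ^ (-(1:ℝ)/2) := by
      rw [← hinv]; exact k1_small hl0.le h1l.le
    have hp2 : ∫ r in (1/l)..c, r ^ (-(1:ℝ)/2) * Real.exp (-(l*r)) ≤ 3 * l ^ (-(1:ℝ)/2) := by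
      have hii2 : IntervalIntegrable (fun r : ℝ => 4 * l ^ (-(2:ℝ)) * r ^ (-(5:ℝ)/2)) volume (1/l) c := by
        apply IntervalIntegrable.const_mul
        exact intervalIntegrable_rpow (Or.inr (notMem_uIcc_of_lt h1l (lt_trans h1l hcase)))
      have hmono : ∫ r in (1/l)..c, r ^ (-(1:ℝ)/2) * Real.exp (-(l*r))
          ≤ ∫ r in (1/l)..c, 4 * l ^ (-(2:ℝ)) * r ^ (-(5:ℝ)/2) := by
        apply integral_mono_on hcase.le (k1_ii l _ _) hii2
        intro x hx
        have hx0 : (0:ℝ) < x := lt_of_lt_of_le h1l hx.1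
        have hlx : (0:ℝ) < l * x := by positivity
        have he : Real.exp (-(l*x)) ≤ 4 * (l*x) ^ (-(2:ℝ)) := exp_neg_le_rpow' hlx
        have hsplit : (l*x) ^ (-(2:ℝ)) = l ^ (-(2:ℝ)) * x ^ (-(2:ℝ)) := by
          rw [← Real.mul_rpow hl0.le hx0.le]
        have hxc : x ^ (-(1:ℝ)/2) * x ^ (-(2:ℝ)) = x ^ (-(5:ℝ)/2) := by
          rw [← Real.rpow_add hx0]; norm_num
        have h0 : (0:ℝ) ≤ x ^ (-(1:ℝ)/2) := Real.rpow_nonneg hx0.le _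
        calc x ^ (-(1:ℝ)/2) * Real.exp (-(l*x)) ≤ x ^ (-(1:ℝ)/2) * (4 * (l*x) ^ (-(2:ℝ))) := by
              nlinarith
          _ = 4 * l ^ (-(2:ℝ)) * x ^ (-(5:ℝ)/2) := by rw [hsplit, ← hxc]; ring
      have hval : ∫ r in (1/l)..c, 4 * l ^ (-(2:ℝ)) * r ^ (-(5:ℝ)/2) ≤ 3 * l ^ (-(1:ℝ)/2) := by
        rw [intervalIntegral.integral_const_mul, integral_rpow (Or.inr ⟨by norm_num,
          notMem_uIcc_of_lt h1l (lt_trans h1l hcase)⟩)]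
        have e1 : ((1:ℝ)/l) ^ (-(5:ℝ)/2 + 1) = l ^ ((3:ℝ)/2) := by
          rw [one_div, ← Real.rpow_neg_one l, ← Real.rpow_mul hl0.le]; norm_num
        have e2 : l ^ (-(2:ℝ)) * l ^ ((3:ℝ)/2) = l ^ (-(1:ℝ)/2) := by
          rw [← Real.rpow_add hl0]; norm_num
        have e3 : (0:ℝ) ≤ c ^ (-(5:ℝ)/2 + 1) := Real.rpow_nonneg (le_trans h1l.le hcase.le) _
        have e4 : (0:ℝ) ≤ l ^ (-(2:ℝ)) := Real.rpow_nonneg hl0.le _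
        rw [e1]
        have : 4 * l ^ (-(2:ℝ)) * ((c ^ (-(5:ℝ)/2 + 1) - l ^ ((3:ℝ)/2)) / (-(5:ℝ)/2 + 1))
            = (8/3) * (l ^ (-(2:ℝ)) * l ^ ((3:ℝ)/2)) - (8/3) * (l ^ (-(2:ℝ)) * c ^ (-(5:ℝ)/2 + 1)) := by
          ring
        rw [this, e2]
        nlinarith
      linarith
    linarith

noncomputable def Kk (l t s : ℝ) : ℝ :=
  (t - s) ^ (-(1:ℝ)/2) * s ^ (-(1:ℝ)/2) * Real.exp (-(l*(t-s)))

private lemma kii_left {l t : ℝ} (ht : 0 < t) :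
    IntervalIntegrable (Kk l t) volume 0 (t/2) := by
  have hbase : IntervalIntegrable (fun s : ℝ => s ^ (-(1:ℝ)/2) *
      ((t - s) ^ (-(1:ℝ)/2) * Real.exp (-(l*(t-s))))) volume 0 (t/2) := by
    apply (intervalIntegrable_rpow' (by norm_num)).mul_continuousOn
    apply ContinuousOn.mul
    · apply ContinuousOn.rpow_const
      · exact (continuous_const.sub continuous_id).continuousOn
      · intro x hx
        rw [uIcc_of_le (by linarith)] at hx
        left
        have h2 := hx.2
        intro h
        have : x = t := by linarith [sub_eq_zero.mp h]
        linarith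
    · exact (Real.continuous_exp.comp (by continuity)).continuousOn
  have : Kk l t = fun s => s ^ (-(1:ℝ)/2) * ((t - s) ^ (-(1:ℝ)/2) * Real.exp (-(l*(t-s)))) := by
    funext s; unfold Kk; ring
  rwa [this]

private lemma kii_right {l t : ℝ} (ht : 0 < t) :
    IntervalIntegrable (Kk l t) volume (t/2) t := by
  have hrefl : IntervalIntegrable (fun s : ℝ => (t - s) ^ (-(1:ℝ)/2)) volume (t/2) t := by
    have h := ((intervalIntegrable_rpow' (a := 0) (b := t/2) (r := -(1:ℝ)/2)
      (by norm_num)).comp_sub_left t).symm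
    rw [show t - t/2 = t/2 by ring, sub_zero] at h
    exact h
  have hbase : IntervalIntegrable (fun s : ℝ => (t - s) ^ (-(1:ℝ)/2) *
      (s ^ (-(1:ℝ)/2) * Real.exp (-(l*(t-s))))) volume (t/2) t := by
    apply hrefl.mul_continuousOn
    apply ContinuousOn.mul
    · apply ContinuousOn.rpow_const continuous_id.continuousOn
      intro x hx
      rw [uIcc_of_le (by linarith)] at hx
      left
      have h1 := hx.1
      simp only [id_eq]
      intro h; rw [h] at h1; linarith
    · exact (Real.continuous_exp.comp (by continuity)).continuousOn
  have : Kk l t = fun s => (t - s) ^ (-(1:ℝ)/2) * (s ^ (-(1:ℝ)/2) * Real.exp (-(l*(t-s)))) := by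
    funext s; unfold Kk; ring
  rwa [this]

lemma kii {l t : ℝ} (ht : 0 < t) : IntervalIntegrable (Kk l t) volume 0 t :=
  (kii_left ht).trans (kii_right ht)

lemma k_integrableOn {l t : ℝ} (ht : 0 < t) : IntegrableOn (Kk l t) (Ioc 0 t) volume :=
  (intervalIntegrable_iff_integrableOn_Ioc_of_le ht.le).mp (kii ht)

lemma k2 {l t : ℝ} (hl : 1 ≤ l) (ht : 0 < t) :
    ∫ s in Ioc 0 t, Kk l t s ≤ 10 * l ^ (-(1:ℝ)/2) * t ^ (-(1:ℝ)/2) := by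
  have hl0 : (0:ℝ) < l := lt_of_lt_of_le one_pos hl
  have ht2 : (0:ℝ) < t/2 := by linarith
  have hLneg : (0:ℝ) ≤ l ^ (-(1:ℝ)/2) := Real.rpow_nonneg hl0.le _
  have hTneg : (0:ℝ) ≤ t ^ (-(1:ℝ)/2) := Real.rpow_nonneg ht.le _
  rw [← integral_of_le ht.le,
    ← integral_add_adjacent_intervals (kii_left (l := l) ht) (kii_right (l := l) ht)]
  -- Piece 1
  have hpiece1 : ∫ s in (0:ℝ)..(t/2), Kk l t s ≤ 2 * (l ^ (-(1:ℝ)/2) * t ^ (-(1:ℝ)/2)) := by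
    have hg1 : IntervalIntegrable (fun s : ℝ =>
        ((t/2) ^ (-(1:ℝ)/2) * Real.exp (-(l*(t/2)))) * s ^ (-(1:ℝ)/2)) volume 0 (t/2) :=
      (intervalIntegrable_rpow' (by norm_num)).const_mul _
    have hmono := integral_mono_on ht2.le (kii_left (l := l) ht) hg1 ?_
    · refine le_trans hmono ?_
      rw [intervalIntegral.integral_const_mul, int_rpow_half]
      have hone : (t/2) ^ (-(1:ℝ)/2) * (2 * (t/2) ^ ((1:ℝ)/2)) = 2 := by
        have := rpow_half_mul ht2
        nlinarith
      have hexp : Real.exp (-(l*(t/2))) ≤ (l*t) ^ (-(1:ℝ)/2) := by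
        have := exp_half_le (z := l*t) (by positivity)
        convert this using 2
        ring
      have hsplit : (l*t) ^ (-(1:ℝ)/2) = l ^ (-(1:ℝ)/2) * t ^ (-(1:ℝ)/2) :=
        Real.mul_rpow hl0.le ht.le
      have h1 : (0:ℝ) < (t/2) ^ (-(1:ℝ)/2) := Real.rpow_pos_of_pos ht2 _
      have h2 : (0:ℝ) < (t/2) ^ ((1:ℝ)/2) := Real.rpow_pos_of_pos ht2 _
      calc (t/2) ^ (-(1:ℝ)/2) * Real.exp (-(l*(t/2))) * (2 * (t/2) ^ ((1:ℝ)/2))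
          = (t/2) ^ (-(1:ℝ)/2) * (2 * (t/2) ^ ((1:ℝ)/2)) * Real.exp (-(l*(t/2))) := by ring
        _ = 2 * Real.exp (-(l*(t/2))) := by rw [hone]
        _ ≤ 2 * ((l*t) ^ (-(1:ℝ)/2)) := by nlinarith [Real.exp_pos (-(l*(t/2)))]
        _ = 2 * (l ^ (-(1:ℝ)/2) * t ^ (-(1:ℝ)/2)) := by rw [hsplit]
    · intro x hx
      unfold Kk
      have hx0 : 0 ≤ x := hx.1
      have hxt : x ≤ t/2 := hx.2
      have ha : (t - x) ^ (-(1:ℝ)/2) ≤ (t/2) ^ (-(1:ℝ)/2) :=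
        rpow_neg_half_anti ht2 (by linarith)
      have he : Real.exp (-(l*(t-x))) ≤ Real.exp (-(l*(t/2))) := by
        apply Real.exp_le_exp.mpr
        nlinarith
      have h0a : (0:ℝ) ≤ (t - x) ^ (-(1:ℝ)/2) := Real.rpow_nonneg (by linarith) _
      have h0b : (0:ℝ) ≤ x ^ (-(1:ℝ)/2) := Real.rpow_nonneg hx0 _
      have h0c : (0:ℝ) < Real.exp (-(l*(t-x))) := Real.exp_pos _
      have h0d : (0:ℝ) ≤ (t/2) ^ (-(1:ℝ)/2) := Real.rpow_nonneg ht2.le _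
      nlinarith [mul_le_mul_of_nonneg_right ha (mul_nonneg h0b h0c.le),
        mul_le_mul_of_nonneg_left he (mul_nonneg h0d h0b)]
  -- Piece 2
  have hpiece2 : ∫ s in (t/2)..t, Kk l t s ≤ 8 * (l ^ (-(1:ℝ)/2) * t ^ (-(1:ℝ)/2)) := by
    have hg2base : IntervalIntegrable
        (fun s : ℝ => (t - s) ^ (-(1:ℝ)/2) * Real.exp (-(l*(t-s)))) volume (t/2) t := by
      have h := ((k1_ii l 0 (t/2)).comp_sub_left t).symm
      rw [show t - t/2 = t/2 by ring, sub_zero] at h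
      exact h
    have hg2 : IntervalIntegrable (fun s : ℝ =>
        (t/2) ^ (-(1:ℝ)/2) * ((t - s) ^ (-(1:ℝ)/2) * Real.exp (-(l*(t-s))))) volume (t/2) t :=
      hg2base.const_mul _
    have hmono := integral_mono_on (by linarith : t/2 ≤ t) (kii_right (l := l) ht) hg2 ?_
    · refine le_trans hmono ?_
      rw [intervalIntegral.integral_const_mul]
      have hch : ∫ s in (t/2)..t, (t - s) ^ (-(1:ℝ)/2) * Real.exp (-(l*(t-s)))
          = ∫ r in (0:ℝ)..(t/2), r ^ (-(1:ℝ)/2) * Real.exp (-(l*r)) := by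
        have := integral_comp_sub_left (a := t/2) (b := t)
          (fun r : ℝ => r ^ (-(1:ℝ)/2) * Real.exp (-(l*r))) t
        rw [show t - t = 0 by ring, show t - t/2 = t/2 by ring] at this
        exact this
      rw [hch]
      have hk1 := k1 hl ht2.le
      have hconst : (t/2) ^ (-(1:ℝ)/2) ≤ (3/2) * t ^ (-(1:ℝ)/2) := by
        have h1 : (t/2) ^ (-(1:ℝ)/2) = t ^ (-(1:ℝ)/2) * ((2:ℝ)⁻¹) ^ (-(1:ℝ)/2) := by
          rw [show t/2 = t * 2⁻¹ by ring, Real.mul_rpow ht.le (by norm_num)]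
        have h2 : ((2:ℝ)⁻¹) ^ (-(1:ℝ)/2) = (2:ℝ) ^ ((1:ℝ)/2) := by
          rw [← Real.rpow_neg_one (2:ℝ), ← Real.rpow_mul (by norm_num)]
          norm_num
        have h3 : (2:ℝ) ^ ((1:ℝ)/2) ≤ 3/2 := by
          rw [show ((1:ℝ)/2) = (1/2 : ℝ) by norm_num, ← Real.sqrt_eq_rpow]
          rw [show (3:ℝ)/2 = Real.sqrt ((3/2)^2) by rw [Real.sqrt_sq (by norm_num)]]
          exact Real.sqrt_le_sqrt (by norm_num)
        rw [h1, h2]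
        nlinarith
      have hI0 : (0:ℝ) ≤ ∫ r in (0:ℝ)..(t/2), r ^ (-(1:ℝ)/2) * Real.exp (-(l*r)) := by
        apply integral_nonneg ht2.le
        intro x hx
        have : (0:ℝ) ≤ x ^ (-(1:ℝ)/2) := Real.rpow_nonneg hx.1 _
        positivity
      have h0d : (0:ℝ) ≤ (t/2) ^ (-(1:ℝ)/2) := Real.rpow_nonneg ht2.le _
      nlinarith
    · intro x hx
      unfold Kk
      have hx1 : t/2 ≤ x := hx.1
      have hb : x ^ (-(1:ℝ)/2) ≤ (t/2) ^ (-(1:ℝ)/2) := rpow_neg_half_anti ht2 hx1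
      have h0a : (0:ℝ) ≤ (t - x) ^ (-(1:ℝ)/2) := Real.rpow_nonneg (by linarith [hx.2]) _
      have h0c : (0:ℝ) < Real.exp (-(l*(t-x))) := Real.exp_pos _
      nlinarith [mul_le_mul_of_nonneg_right hb (mul_nonneg h0a h0c.le)]
  linarith

/-- combined continuity estimate: under the hypotheses of the
mild-solution difference estimate, there is a constant `C₂ = C₂(L, M, a, t₁)`
such that any two mild solutions `u, v` with data `u₀, v₀ ∈ V` satisfy
`‖u t - v t‖_V ≤ C₂ (1 + t^{-1/2}) ‖ι u₀ - ι v₀‖_H` on `(0, t₁]`. -/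
theorem mild_solution_continuity_estimate
    {H V : Type*} [NormedAddCommGroup H] [InnerProductSpace ℝ H]
    [CompleteSpace H] [NormedAddCommGroup V] [NormedSpace ℝ V] [CompleteSpace V]
    (ι : V →L[ℝ] H) (hι : ∀ w : V, ‖ι w‖ ≤ ‖w‖)
    (E : ℝ → H →L[ℝ] V) (M a : ℝ) (hM : 0 < M) (ha : 0 < a)
    (hEH : ∀ t : ℝ, 0 < t → ∀ w : H, ‖ι (E t w)‖ ≤ M * Real.exp (a * t) * ‖w‖)
    (hEV : ∀ t : ℝ, 0 < t → ∀ w : H,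
      ‖E t w‖ ≤ M * Real.exp (a * t) * t ^ (-(1:ℝ)/2) * ‖w‖)
    (F : V → H) (L t₁ : ℝ) (hL : 0 ≤ L) (ht₁ : 0 < t₁) :
    ∃ C₂ : ℝ, 0 < C₂ ∧
      ∀ (u v : ℝ → V) (u₀ v₀ : V), u 0 = u₀ → v 0 = v₀ →
        ContinuousOn u (Icc 0 t₁) → ContinuousOn v (Icc 0 t₁) →
        (∀ s : ℝ, s ∈ Icc 0 t₁ → ‖F (u s) - F (v s)‖ ≤ L * ‖u s - v s‖) →
        (∀ t ∈ Ioc 0 t₁,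
          IntegrableOn (fun s => E (t - s) (F (u s))) (Ioc 0 t) volume) →
        (∀ t ∈ Ioc 0 t₁,
          IntegrableOn (fun s => E (t - s) (F (v s))) (Ioc 0 t) volume) →
        (∀ t ∈ Ioc 0 t₁,
          u t = E t (ι u₀) + ∫ s in Ioc 0 t, E (t - s) (F (u s))) →
        (∀ t ∈ Ioc 0 t₁,
          v t = E t (ι v₀) + ∫ s in Ioc 0 t, E (t - s) (F (v s))) →
        ∀ t ∈ Ioc 0 t₁,
          ‖u t - v t‖ ≤ C₂ * (1 + t ^ (-(1:ℝ)/2)) * ‖ι u₀ - ι v₀‖ := by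
  set b := M * L * Real.exp (a * t₁) with hbdef
  have hb0 : 0 ≤ b := by positivity
  set l := 1 + 400 * b^2 with hldef
  have hl1 : (1:ℝ) ≤ l := by nlinarith
  have hl0 : (0:ℝ) < l := lt_of_lt_of_le one_pos hl1
  have hLneg : (0:ℝ) ≤ l ^ (-(1:ℝ)/2) := Real.rpow_nonneg hl0.le _
  have hsmall : 10 * b * l ^ (-(1:ℝ)/2) ≤ 1/2 := by
    rcases eq_or_lt_of_le hb0 with hbz | hbz
    · rw [← hbz]; norm_num
    · have hsq : (20*b)^2 ≤ l := by nlinarith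
      have h20 : 20*b ≤ l ^ ((1:ℝ)/2) := by
        have h1 := Real.rpow_le_rpow (by positivity) hsq (by norm_num : (0:ℝ) ≤ 1/2)
        have h2 : ((20*b)^2) ^ ((1:ℝ)/2) = 20*b := by
          rw [← Real.rpow_natCast (20*b) 2, ← Real.rpow_mul (by positivity)]
          norm_num
        rwa [h2] at h1
      have hpos : (0:ℝ) < l ^ ((1:ℝ)/2) := Real.rpow_pos_of_pos hl0 _
      have hinv : l ^ (-(1:ℝ)/2) ≤ (20*b)⁻¹ := by
        rw [show -(1:ℝ)/2 = -((1:ℝ)/2) by ring, Real.rpow_neg hl0.le]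
        exact inv_anti₀ (by positivity) h20
      have : 10 * b * l ^ (-(1:ℝ)/2) ≤ 10 * b * (20*b)⁻¹ :=
        mul_le_mul_of_nonneg_left hinv (by positivity)
      rw [show 10 * b * (20*b)⁻¹ = 1/2 by field_simp; ring] at this
      exact this
  clear_value b l
  refine ⟨2 * (M * Real.exp (a*t₁)) * Real.exp (l*t₁), by positivity, ?_⟩
  intro u v u₀ v₀ hu0 hv0 huc hvc hLip huI hvI huE hvE
  set δ := ‖ι u₀ - ι v₀‖ with hδdef
  have hδ0 : 0 ≤ δ := norm_nonneg _
  set φ : ℝ → ℝ := fun s => ‖u s - v s‖ with hφdef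
  have hφc : ContinuousOn φ (Icc 0 t₁) := (huc.sub hvc).norm
  set g : ℝ → ℝ := fun s => Real.exp (-(l*s)) * (s ^ ((1:ℝ)/2) * φ s) with hgdef
  have hgc : ContinuousOn g (Icc 0 t₁) := by
    apply ContinuousOn.mul
    · exact (Real.continuous_exp.comp (by continuity)).continuousOn
    · exact ((continuousOn_id.rpow_const (fun x _ => Or.inr (by norm_num))).mul hφc)
  obtain ⟨s₀, hs₀mem, hs₀max⟩ :=
    isCompact_Icc.exists_isMaxOn (nonempty_Icc.mpr ht₁.le) hgc
  set N := g s₀ with hNdef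
  clear_value δ φ g N
  have hN0 : 0 ≤ N := by
    have h0mem : (0:ℝ) ∈ Icc 0 t₁ := ⟨le_refl _, ht₁.le⟩
    have hg0 : g 0 = 0 := by
      simp [hgdef, Real.zero_rpow (show ((1:ℝ)/2) ≠ 0 by norm_num)]
    have h := hs₀max h0mem
    simp only [mem_setOf_eq, hg0] at h
    rw [hNdef]
    exact h
  have hφle : ∀ s : ℝ, s ∈ Icc 0 t₁ → 0 < s →
      φ s ≤ N * Real.exp (l*s) * s ^ (-(1:ℝ)/2) := by
    intro s hsmem hs
    have hEe : Real.exp (l*s) * Real.exp (-(l*s)) = 1 := by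
      rw [← Real.exp_add]; simp
    have hhalf := rpow_half_mul hs
    have hgN : g s ≤ N := by rw [hNdef]; exact hs₀max hsmem
    calc φ s = (Real.exp (l*s) * Real.exp (-(l*s))) * ((s ^ ((1:ℝ)/2)) * s ^ (-(1:ℝ)/2)) * φ s := by
          rw [hEe, hhalf]; ring
      _ = (Real.exp (l*s) * s ^ (-(1:ℝ)/2)) * g s := by
          simp only [hgdef]; ring
      _ ≤ (Real.exp (l*s) * s ^ (-(1:ℝ)/2)) * N := by
          apply mul_le_mul_of_nonneg_left hgN
          positivity
      _ = N * Real.exp (l*s) * s ^ (-(1:ℝ)/2) := by ring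
  have hkey : N ≤ 2 * (M * Real.exp (a*t₁)) * δ := by
    rcases eq_or_lt_of_le hs₀mem.1 with hz | hs₀pos
    · have hg0 : g 0 = 0 := by
        simp [hgdef, Real.zero_rpow (show ((1:ℝ)/2) ≠ 0 by norm_num)]
      rw [hNdef, ← hz, hg0]
      positivity
    · have hs₀Ioc : s₀ ∈ Ioc 0 t₁ := ⟨hs₀pos, hs₀mem.2⟩
      have hdiff : u s₀ - v s₀ = E s₀ (ι u₀ - ι v₀)
          + ∫ s in Ioc 0 s₀, (E (s₀ - s) (F (u s)) - E (s₀ - s) (F (v s))) := by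
        rw [huE s₀ hs₀Ioc, hvE s₀ hs₀Ioc]
        rw [integral_sub (huI s₀ hs₀Ioc) (hvI s₀ hs₀Ioc), map_sub]
        abel
      have hterm1 : ‖E s₀ (ι u₀ - ι v₀)‖ ≤ M * Real.exp (a*t₁) * s₀ ^ (-(1:ℝ)/2) * δ := by
        refine le_trans (hEV s₀ hs₀pos _) ?_
        have hexp : Real.exp (a*s₀) ≤ Real.exp (a*t₁) := by
          apply Real.exp_le_exp.mpr; nlinarith [hs₀mem.2]
        have h0 : (0:ℝ) ≤ s₀ ^ (-(1:ℝ)/2) := Real.rpow_nonneg hs₀pos.le _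
        have hδr : ‖ι u₀ - ι v₀‖ = δ := hδdef.symm
        rw [hδr]
        nlinarith [mul_le_mul_of_nonneg_right (mul_le_mul_of_nonneg_left hexp hM.le)
          (mul_nonneg h0 hδ0)]
      have hIbound : ∫ s in Ioc 0 s₀, ‖E (s₀ - s) (F (u s)) - E (s₀ - s) (F (v s))‖
          ≤ (b * (N * Real.exp (l*s₀))) * ∫ s in Ioc 0 s₀, Kk l s₀ s := by
        rw [← MeasureTheory.integral_const_mul]
        have hIoo : volume.restrict (Ioo (0:ℝ) s₀) = volume.restrict (Ioc 0 s₀) :=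
          Measure.restrict_congr_set Ioo_ae_eq_Ioc
        rw [← hIoo]
        apply integral_mono_of_nonneg
        · exact ae_of_all _ (fun s => norm_nonneg _)
        · exact ((k_integrableOn hs₀pos).mono_set Ioo_subset_Ioc_self).const_mul _
        · apply ae_restrict_of_forall_mem measurableSet_Ioo
          intro s hs
          have hs0 : 0 < s := hs.1
          have hss : s < s₀ := hs.2
          have hsmem2 : s ∈ Icc 0 t₁ := ⟨hs0.le, le_trans hss.le hs₀mem.2⟩
          have hF := hLip s hsmem2
          have hφs := hφle s hsmem2 hs0
          simp only [hφdef] at hφs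
          have hstep := hEV (s₀ - s) (by linarith) (F (u s) - F (v s))
          show ‖E (s₀ - s) (F (u s)) - E (s₀ - s) (F (v s))‖
            ≤ b * (N * Real.exp (l*s₀)) * Kk l s₀ s
          rw [← map_sub]
          have hexp : Real.exp (a*(s₀-s)) ≤ Real.exp (a*t₁) := by
            apply Real.exp_le_exp.mpr
            nlinarith [hs₀mem.2]
          have h0k : (0:ℝ) ≤ (s₀ - s) ^ (-(1:ℝ)/2) := Real.rpow_nonneg (by linarith) _
          have h0s : (0:ℝ) ≤ s ^ (-(1:ℝ)/2) := Real.rpow_nonneg hs0.le _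
          have h0X : (0:ℝ) ≤ N * Real.exp (l*s) * s ^ (-(1:ℝ)/2) := by
            apply mul_nonneg (mul_nonneg hN0 (Real.exp_pos _).le) h0s
          have hφn : ‖F (u s) - F (v s)‖ ≤ L * (N * Real.exp (l*s) * s ^ (-(1:ℝ)/2)) :=
            le_trans hF (mul_le_mul_of_nonneg_left hφs hL)
          have hchain : ‖E (s₀ - s) (F (u s) - F (v s))‖
              ≤ M * Real.exp (a*t₁) * (s₀ - s) ^ (-(1:ℝ)/2)
                * (L * (N * Real.exp (l*s) * s ^ (-(1:ℝ)/2))) := by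
            refine le_trans hstep ?_
            have hk1 : M * Real.exp (a*(s₀-s)) * (s₀ - s) ^ (-(1:ℝ)/2)
                ≤ M * Real.exp (a*t₁) * (s₀ - s) ^ (-(1:ℝ)/2) :=
              mul_le_mul_of_nonneg_right (mul_le_mul_of_nonneg_left hexp hM.le) h0k
            calc M * Real.exp (a*(s₀-s)) * (s₀ - s) ^ (-(1:ℝ)/2) * ‖F (u s) - F (v s)‖
                ≤ M * Real.exp (a*(s₀-s)) * (s₀ - s) ^ (-(1:ℝ)/2)
                  * (L * (N * Real.exp (l*s) * s ^ (-(1:ℝ)/2))) := by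
                  apply mul_le_mul_of_nonneg_left hφn
                  positivity
              _ ≤ M * Real.exp (a*t₁) * (s₀ - s) ^ (-(1:ℝ)/2)
                  * (L * (N * Real.exp (l*s) * s ^ (-(1:ℝ)/2))) := by
                  apply mul_le_mul_of_nonneg_right hk1
                  exact mul_nonneg hL h0X
          refine le_trans hchain (le_of_eq ?_)
          have hee : Real.exp (l*s) = Real.exp (l*s₀) * Real.exp (-(l*(s₀-s))) := by
            rw [← Real.exp_add]; ring_nf
          rw [hee]
          unfold Kk
          rw [hbdef]
          ring
      have hk2 := k2 hl1 hs₀pos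
      have hKnn : (0:ℝ) ≤ b * (N * Real.exp (l*s₀)) := by
        apply mul_nonneg hb0 (mul_nonneg hN0 (Real.exp_pos _).le)
      have hφs₀ : φ s₀ ≤ M * Real.exp (a*t₁) * s₀ ^ (-(1:ℝ)/2) * δ
          + (b * (N * Real.exp (l*s₀))) * (10 * l ^ (-(1:ℝ)/2) * s₀ ^ (-(1:ℝ)/2)) := by
        have h1 : φ s₀ ≤ ‖E s₀ (ι u₀ - ι v₀)‖
            + ∫ s in Ioc 0 s₀, ‖E (s₀ - s) (F (u s)) - E (s₀ - s) (F (v s))‖ := by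
          have heq : φ s₀ = ‖E s₀ (ι u₀ - ι v₀)
              + ∫ s in Ioc 0 s₀, (E (s₀ - s) (F (u s)) - E (s₀ - s) (F (v s)))‖ := by
            simp only [hφdef]
            rw [hdiff]
          rw [heq]
          exact le_trans (norm_add_le _ _)
            (add_le_add (le_refl _) (MeasureTheory.norm_integral_le_integral_norm _))
        have h2 : (b * (N * Real.exp (l*s₀))) * ∫ s in Ioc 0 s₀, Kk l s₀ s
            ≤ (b * (N * Real.exp (l*s₀))) * (10 * l ^ (-(1:ℝ)/2) * s₀ ^ (-(1:ℝ)/2)) :=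
          mul_le_mul_of_nonneg_left hk2 hKnn
        linarith [hIbound, hterm1]
      have hEe2 : Real.exp (l*s₀) * Real.exp (-(l*s₀)) = 1 := by
        rw [← Real.exp_add]; simp
      have hh := rpow_half_mul hs₀pos
      have hexpneg : Real.exp (-(l*s₀)) ≤ 1 := by
        rw [Real.exp_le_one_iff]
        nlinarith
      have hNle : N ≤ M * Real.exp (a*t₁) * δ + 10 * b * l ^ (-(1:ℝ)/2) * N := by
        have hK0 : (0:ℝ) ≤ Real.exp (-(l*s₀)) * s₀ ^ ((1:ℝ)/2) := by positivity
        have hmul := mul_le_mul_of_nonneg_left hφs₀ hK0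
        have hNeq : N = (Real.exp (-(l*s₀)) * s₀ ^ ((1:ℝ)/2)) * φ s₀ := by
          simp only [hNdef, hgdef]; ring
        have hfact : (Real.exp (-(l*s₀)) * s₀ ^ ((1:ℝ)/2))
            * (M * Real.exp (a*t₁) * s₀ ^ (-(1:ℝ)/2) * δ
              + (b * (N * Real.exp (l*s₀))) * (10 * l ^ (-(1:ℝ)/2) * s₀ ^ (-(1:ℝ)/2)))
            = (s₀ ^ ((1:ℝ)/2) * s₀ ^ (-(1:ℝ)/2))
              * (M * Real.exp (a*t₁) * δ * Real.exp (-(l*s₀))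
                + 10 * b * l ^ (-(1:ℝ)/2) * N * (Real.exp (l*s₀) * Real.exp (-(l*s₀)))) := by
          ring
        rw [hfact, hh, hEe2, one_mul, mul_one] at hmul
        rw [← hNeq] at hmul
        have hMδ : (0:ℝ) ≤ M * Real.exp (a*t₁) * δ := by positivity
        have : M * Real.exp (a*t₁) * δ * Real.exp (-(l*s₀)) ≤ M * Real.exp (a*t₁) * δ := by
          nlinarith [Real.exp_pos (-(l*s₀))]
        linarith
      have h10 : 10 * b * l ^ (-(1:ℝ)/2) * N ≤ (1/2) * N := by
        exact mul_le_mul_of_nonneg_right hsmall hN0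
      linarith
  intro t ht
  have htmem : t ∈ Icc 0 t₁ := ⟨ht.1.le, ht.2⟩
  have h1 := hφle t htmem ht.1
  have h2 : Real.exp (l*t) ≤ Real.exp (l*t₁) := by
    apply Real.exp_le_exp.mpr
    nlinarith [ht.2]
  have h0t : (0:ℝ) ≤ t ^ (-(1:ℝ)/2) := Real.rpow_nonneg ht.1.le _
  have h3 : N * Real.exp (l*t) * t ^ (-(1:ℝ)/2)
      ≤ (2*(M*Real.exp (a*t₁))*δ) * Real.exp (l*t₁) * t ^ (-(1:ℝ)/2) := by
    apply mul_le_mul_of_nonneg_right _ h0t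
    have h4 : N * Real.exp (l*t) ≤ (2*(M*Real.exp (a*t₁))*δ) * Real.exp (l*t₁) :=
      mul_le_mul hkey h2 (Real.exp_pos _).le (by positivity)
    exact h4
  have hC0 : (0:ℝ) ≤ 2*(M*Real.exp (a*t₁))*Real.exp (l*t₁) := by positivity
  calc ‖u t - v t‖ = φ t := by rw [hφdef]
    _ ≤ N * Real.exp (l*t) * t ^ (-(1:ℝ)/2) := h1
    _ ≤ (2*(M*Real.exp (a*t₁))*δ)*Real.exp (l*t₁)*t ^ (-(1:ℝ)/2) := h3
    _ ≤ 2*(M*Real.exp (a*t₁))*Real.exp (l*t₁) * (1 + t ^ (-(1:ℝ)/2)) * δ := by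
        nlinarith [mul_nonneg hC0 hδ0]
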